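/- Let f_W(x) = W^L ρ(W^{L-1} ⋯ ρ(W^1 x) ⋯) be an L-layer neural network with 1-Lipschitz activation ρ, and let f_Ŵ denote the network with all weight matrices replaced by Ŵ^m ∈ B_{W^m}(ε_m), m ∈ [L]. Then for any x̂ ∈ B_x(ε_x) and every pair of output classes i, j, the input-perturbation part of the margin error of the perturbed network satisfies f^{ij}_{Ŵ}(x̂) − f^{ij}_{Ŵ}(x) ≤ ε_x (‖W^L_{i,:} − W^L_{j,:}‖_1 + 2 d_L ε_L) ∏_{m=1}^{L−1} (‖W^m‖_∞ + d_m ε_m) = τ^{ij}_W(ξ), where d_m denotes the number of columns of W^m. -/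
import Mathlib


/-- Vector ℓ1 norm: `‖v‖₁ = Σ_q |v_q|`. -/
noncomputable def vecL1 {n : ℕ} (v : Fin n → ℝ) : ℝ := ∑ q, |v q|

/-- Vector ℓ∞ norm: `‖v‖_∞ = max_q |v_q|`. -/
noncomputable def vecLinf {n : ℕ} (v : Fin n → ℝ) : ℝ := ⨆ q, |v q|

/-- Matrix ℓ∞→ℓ∞ operator norm: `‖W‖_∞ = max_p Σ_q |W_{p,q}|`. -/
noncomputable def matLinf {m n : ℕ} (W : Matrix (Fin m) (Fin n) ℝ) : ℝ := ⨆ p, ∑ q, |W p q|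

/-- Matrix ℓ1→ℓ1 operator norm: `‖W‖₁ = max_q Σ_p |W_{p,q}|`. -/
noncomputable def matL1 {m n : ℕ} (W : Matrix (Fin m) (Fin n) ℝ) : ℝ := ⨆ q, ∑ p, |W p q|

/-- `zLayer d ρ W k x` is the `k`-th zLayer-layer output
`z^k_W(x) = ρ(W^k ⋯ ρ(W^1 x) ⋯)`, with `z^0_W(x) = x`.
Here `W k` denotes the paper's weight matrix `W^{k+1}`
(so `W : ∀ k, Matrix (Fin (d (k+1))) (Fin (d k)) ℝ` lists `W^1, W^2, …`). -/
noncomputable def zLayer (d : ℕ → ℕ) (ρ : ℝ → ℝ)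
    (W : ∀ k, Matrix (Fin (d (k + 1))) (Fin (d k)) ℝ) :
    (k : ℕ) → (Fin (d 0) → ℝ) → Fin (d k) → ℝ
  | 0, x => x
  | k + 1, x => fun p => ρ ((W k).mulVec (zLayer d ρ W k x) p)

/-- `nnet d ρ W k x = (W^{k+1}) z^k_W(x)` is the output of the `(k+1)`-layer network
`f_W(x) = W^{k+1} ρ(W^k ⋯ ρ(W^1 x) ⋯)`.  In particular `nnet d ρ W (L-1)` is the
paper's `L`-layer network. -/
noncomputable def nnet (d : ℕ → ℕ) (ρ : ℝ → ℝ)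
    (W : ∀ k, Matrix (Fin (d (k + 1))) (Fin (d k)) ℝ) (k : ℕ)
    (x : Fin (d 0) → ℝ) : Fin (d (k + 1)) → ℝ :=
  (W k).mulVec (zLayer d ρ W k x)

lemma matLinf_nonneg {m n : ℕ} (W : Matrix (Fin m) (Fin n) ℝ) : 0 ≤ matLinf W :=
  Real.iSup_nonneg fun p => Finset.sum_nonneg fun q _ => abs_nonneg _

lemma sum_le_matLinf {m n : ℕ} (W : Matrix (Fin m) (Fin n) ℝ) (p : Fin m) :
    ∑ q, |W p q| ≤ matLinf W :=
  le_ciSup (Set.Finite.bddAbove (Set.finite_range fun p => ∑ q, |W p q|)) p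

lemma zdiff_bound (d : ℕ → ℕ) (ρ : ℝ → ℝ)
    (hρ_lip : ∀ s t, |ρ s - ρ t| ≤ |s - t|)
    (L : ℕ)
    (W What : ∀ k, Matrix (Fin (d (k + 1))) (Fin (d k)) ℝ)
    (ε : ℕ → ℝ) (εx : ℝ) (hε : ∀ k, 0 ≤ ε k) (hεx : 0 ≤ εx)
    (hW : ∀ k, k < L → ∀ p q, |What k p q - W k p q| ≤ ε k)
    (x xhat : Fin (d 0) → ℝ) (hx : ∀ q, |xhat q - x q| ≤ εx) :
    ∀ k, k ≤ L → ∀ p, |zLayer d ρ What k xhat p - zLayer d ρ What k x p| ≤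
      εx * ∏ m ∈ Finset.range k, (matLinf (W m) + (d m : ℝ) * ε m) := by
  intro k
  induction k with
  | zero => intro _ p; simpa [zLayer] using hx p
  | succ k ih =>
    intro hk p
    have hkL : k < L := by omega
    have ih' := ih (by omega)
    set C := εx * ∏ m ∈ Finset.range k, (matLinf (W m) + (d m : ℝ) * ε m) with hCdef
    have hC : 0 ≤ C :=
      mul_nonneg hεx (Finset.prod_nonneg fun m _ =>
        add_nonneg (matLinf_nonneg _) (mul_nonneg (Nat.cast_nonneg _) (hε m)))
    have step : |zLayer d ρ What (k + 1) xhat p - zLayer d ρ What (k + 1) x p| ≤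
        (matLinf (W k) + (d k : ℝ) * ε k) * C := by
      have h1 : |zLayer d ρ What (k + 1) xhat p - zLayer d ρ What (k + 1) x p| ≤
          |(What k).mulVec (zLayer d ρ What k xhat) p -
            (What k).mulVec (zLayer d ρ What k x) p| := by
        simpa [zLayer] using
          hρ_lip ((What k).mulVec (zLayer d ρ What k xhat) p)
            ((What k).mulVec (zLayer d ρ What k x) p)
      have h2 : (What k).mulVec (zLayer d ρ What k xhat) p -
            (What k).mulVec (zLayer d ρ What k x) p =
          ∑ q, What k p q * (zLayer d ρ What k xhat q - zLayer d ρ What k x q) := by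
        simp [Matrix.mulVec, dotProduct, mul_sub, Finset.sum_sub_distrib]
      have h3 : |∑ q, What k p q * (zLayer d ρ What k xhat q - zLayer d ρ What k x q)| ≤
          ∑ q, (|W k p q| + ε k) * C := by
        refine (Finset.abs_sum_le_sum_abs _ _).trans (Finset.sum_le_sum fun q _ => ?_)
        rw [abs_mul]
        have hWh : |What k p q| ≤ |W k p q| + ε k := by
          have := hW k hkL p q
          have h := abs_sub_abs_le_abs_sub (What k p q) (W k p q)
          linarith
        exact mul_le_mul hWh (ih' q) (abs_nonneg _) (by linarith [abs_nonneg (W k p q), hε k])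
      have h4 : ∑ q, (|W k p q| + ε k) * C ≤ (matLinf (W k) + (d k : ℝ) * ε k) * C := by
        rw [← Finset.sum_mul]
        refine mul_le_mul_of_nonneg_right ?_ hC
        rw [Finset.sum_add_distrib]
        simp only [Finset.sum_const, Finset.card_univ, Fintype.card_fin, nsmul_eq_mul]
        exact add_le_add (sum_le_matLinf _ p) le_rfl
      calc |zLayer d ρ What (k + 1) xhat p - zLayer d ρ What (k + 1) x p|
          ≤ |∑ q, What k p q * (zLayer d ρ What k xhat q - zLayer d ρ What k x q)| := by
            rw [← h2]; exact h1
        _ ≤ ∑ q, (|W k p q| + ε k) * C := h3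
        _ ≤ (matLinf (W k) + (d k : ℝ) * ε k) * C := h4
    calc |zLayer d ρ What (k + 1) xhat p - zLayer d ρ What (k + 1) x p|
        ≤ (matLinf (W k) + (d k : ℝ) * ε k) * C := step
      _ = εx * ∏ m ∈ Finset.range (k + 1), (matLinf (W m) + (d m : ℝ) * ε m) := by
          rw [hCdef, Finset.prod_range_succ]; ring

/-- for the all-layer-perturbed network `f_Ŵ` (with
`Ŵ^m ∈ B_{W^m}(ε_m)` for all `m ∈ [L]`) and any `x̂ ∈ B_x(ε_x)`, the
input-perturbation part of the margin error satisfies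
`f^{ij}_{Ŵ}(x̂) − f^{ij}_{Ŵ}(x) ≤ ε_x (‖W^L_{i,:} − W^L_{j,:}‖_1 + 2 d_L ε_L)
  ∏_{m=1}^{L−1} (‖W^m‖_∞ + d_m ε_m) = τ^{ij}_W(ξ)`.
(`W k` is the paper's `W^{k+1}` and `ε k` the paper's `ε_{k+1}`; `d_m`, the number of
columns of the paper's `W^m`, is `d (m-1)`; `∏_{m=1}^{L-1} ↦ Finset.range (L-1)`.) -/
theorem statement14 (d : ℕ → ℕ) (ρ : ℝ → ℝ)
    (hρ_lip : ∀ s t, |ρ s - ρ t| ≤ |s - t|)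
    (L : ℕ) (hL : 1 ≤ L)
    (W What : ∀ k, Matrix (Fin (d (k + 1))) (Fin (d k)) ℝ)
    (ε : ℕ → ℝ) (εx : ℝ) (hε : ∀ k, 0 ≤ ε k) (hεx : 0 ≤ εx)
    (hW : ∀ k, k < L → ∀ p q, |What k p q - W k p q| ≤ ε k)
    (x xhat : Fin (d 0) → ℝ) (hx : ∀ q, |xhat q - x q| ≤ εx)
    (i j : Fin (d (L - 1 + 1))) :
    (nnet d ρ What (L - 1) xhat i - nnet d ρ What (L - 1) xhat j) -
        (nnet d ρ What (L - 1) x i - nnet d ρ What (L - 1) x j) ≤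
      εx * (vecL1 (fun q => W (L - 1) i q - W (L - 1) j q) +
              2 * (d (L - 1) : ℝ) * ε (L - 1)) *
        ∏ m ∈ Finset.range (L - 1), (matLinf (W m) + (d m : ℝ) * ε m) := by
  have hKL : L - 1 < L := by omega
  have hz := zdiff_bound d ρ hρ_lip L W What ε εx hε hεx hW x xhat hx (L - 1) (by omega)
  set C := εx * ∏ m ∈ Finset.range (L - 1), (matLinf (W m) + (d m : ℝ) * ε m) with hCdef
  have hC : 0 ≤ C :=
    mul_nonneg hεx (Finset.prod_nonneg fun m _ =>
      add_nonneg (matLinf_nonneg _) (mul_nonneg (Nat.cast_nonneg _) (hε m)))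
  have key : (nnet d ρ What (L - 1) xhat i - nnet d ρ What (L - 1) xhat j) -
      (nnet d ρ What (L - 1) x i - nnet d ρ What (L - 1) x j) =
      ∑ q, (What (L - 1) i q - What (L - 1) j q) *
        (zLayer d ρ What (L - 1) xhat q - zLayer d ρ What (L - 1) x q) := by
    simp [nnet, Matrix.mulVec, dotProduct, mul_sub, sub_mul, Finset.sum_sub_distrib]
  rw [key]
  have hbd : ∑ q, (What (L - 1) i q - What (L - 1) j q) *
        (zLayer d ρ What (L - 1) xhat q - zLayer d ρ What (L - 1) x q) ≤
      ∑ q, (|W (L - 1) i q - W (L - 1) j q| + 2 * ε (L - 1)) * C := by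
    refine Finset.sum_le_sum fun q _ => ?_
    have h1 : (What (L - 1) i q - What (L - 1) j q) *
        (zLayer d ρ What (L - 1) xhat q - zLayer d ρ What (L - 1) x q) ≤
        |What (L - 1) i q - What (L - 1) j q| * |zLayer d ρ What (L - 1) xhat q - zLayer d ρ What (L - 1) x q| := by
      rw [← abs_mul]; exact le_abs_self _
    have h2 : |What (L - 1) i q - What (L - 1) j q| ≤ |W (L - 1) i q - W (L - 1) j q| + 2 * ε (L - 1) := by
      have hi := hW (L - 1) hKL i q
      have hj := hW (L - 1) hKL j q
      have : What (L - 1) i q - What (L - 1) j q =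
          (W (L - 1) i q - W (L - 1) j q) + ((What (L - 1) i q - W (L - 1) i q) - (What (L - 1) j q - W (L - 1) j q)) := by ring
      calc |What (L - 1) i q - What (L - 1) j q| ≤
          |W (L - 1) i q - W (L - 1) j q| + |(What (L - 1) i q - W (L - 1) i q) - (What (L - 1) j q - W (L - 1) j q)| := by
            rw [this]; exact abs_add_le _ _
        _ ≤ |W (L - 1) i q - W (L - 1) j q| + 2 * ε (L - 1) := by
            have := abs_sub (What (L - 1) i q - W (L - 1) i q) (What (L - 1) j q - W (L - 1) j q)
            linarith
    exact h1.trans (mul_le_mul h2 (hz q) (abs_nonneg _)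
      (by linarith [abs_nonneg (W (L - 1) i q - W (L - 1) j q), hε (L - 1)]))
  refine hbd.trans ?_
  rw [← Finset.sum_mul, Finset.sum_add_distrib]
  simp only [Finset.sum_const, Finset.card_univ, Fintype.card_fin, nsmul_eq_mul]
  have : (vecL1 fun q => W (L - 1) i q - W (L - 1) j q) = ∑ q, |W (L - 1) i q - W (L - 1) j q| := rfl
  rw [hCdef]
  rw [this]
  ring_nf
  apply le_of_eq
  ring
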